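/- Let π and π** be partitions such that the Young diagram of π is contained in that of π** and the skew shape π**∖π is a border strip of length ℓ, i.e., it consists of ℓ cells, is edgewise connected, and contains no 2×2 square of cells. Let (x,y) be the head of the strip, i.e., its cell with the largest column index (rows and columns indexed from 1, row x, column y). Then srank(π**) ≡ srank(π) + 2ℓ(x + y) + ℓ² − ℓ (mod 4). -/

import Mathlib

open scoped Classical

noncomputable section

namespace BGG

/-- The number of odd parts of a partition (given as a multiset of parts). -/
def oddParts (M : Multiset ℕ) : ℕ := (M.filter (fun p => Odd p)).card

/-- The `j`-th part of the conjugate partition: the number of parts that are `≥ j`. -/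
def conjCount (M : Multiset ℕ) (j : ℕ) : ℕ := (M.filter (fun p => j ≤ p)).card

/-- The number of odd parts of the conjugate partition. -/
def oddConjParts (M : Multiset ℕ) : ℕ :=
  ((Finset.Icc 1 M.sum).filter (fun j => Odd (conjCount M j))).card

/-- Stanley's srank: the number of odd parts minus the number of odd parts of the conjugate. -/
def srank (M : Multiset ℕ) : ℤ := (oddParts M : ℤ) - (oddConjParts M : ℤ)

/-- The `x`-th part `λ_x` (for `x ≥ 1`) of the partition with parts `M`. -/
def rowLen (M : Multiset ℕ) (x : ℕ) : ℕ :=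
  ((Finset.Icc 1 M.sum).filter (fun j => x ≤ conjCount M j)).card

/-- The cell in row `x`, column `y` (both indexed from 1) lies in the Young diagram. -/
def CellMem (M : Multiset ℕ) (x y : ℕ) : Prop := 1 ≤ x ∧ 1 ≤ y ∧ x ≤ conjCount M y

/-- A partition is a `t`-core if no cell of its Young diagram has hook length divisible
by `t`. -/
def IsTCore (t : ℕ) (M : Multiset ℕ) : Prop :=
  ∀ x y : ℕ, CellMem M x y → ¬ (t ∣ ((rowLen M x - y) + (conjCount M y - x) + 1))

/-- `rLabel t M i` is the number of cells of the Young diagram labelled `i`, where the cell in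
row `x` and column `y` is labelled `(y - x) mod t`. -/
def rLabel (t : ℕ) (M : Multiset ℕ) (i : ℕ) : ℕ :=
  (((Finset.Icc 1 M.card) ×ˢ (Finset.Icc 1 M.sum)).filter
    (fun c => CellMem M c.1 c.2 ∧ ((c.2 : ℤ) - (c.1 : ℤ)) % (t : ℤ) = (i : ℤ))).card

/-- `nvec t M i = r_i - r_{(i+1) mod t}`. -/
def nvec (t : ℕ) (M : Multiset ℕ) (i : ℕ) : ℤ :=
  (rLabel t M i : ℤ) - (rLabel t M ((i + 1) % t) : ℤ)

/-- The set of beta-numbers `β_j = λ_j + ν - j`, `1 ≤ j ≤ ν`, where `ν = t * (number of parts)`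
is a multiple of `t` that is at least the number of parts. -/
def betaSet (t : ℕ) (M : Multiset ℕ) : Finset ℕ :=
  (Finset.Icc 1 (t * M.card)).image (fun j => rowLen M j + t * M.card - j)

/-- The `i`-th component `π̂_i` of the `t`-quotient of a partition: if the beta-numbers
congruent to `i` mod `t` are `t c₁ + i > t c₂ + i > ⋯ > t c_s + i` then `π̂_i` has parts
`c_k - (s - k)` (zeros discarded). -/
def tQuotient (t : ℕ) (M : Multiset ℕ) (i : ℕ) : Multiset ℕ :=
  Multiset.filter (fun p => 0 < p)
    (((betaSet t M).filter (fun e => e % t = i)).val.map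
      (fun e => (e - i) / t - ((betaSet t M).filter (fun e' => e' % t = i ∧ e' < e)).card))

/-- The 2-quotient-rank: the number of parts of `π̂₀` minus the number of parts of `π̂₁`. -/
def tqrank (M : Multiset ℕ) : ℤ :=
  ((tQuotient 2 M 0).card : ℤ) - ((tQuotient 2 M 1).card : ℤ)

/-- The Andrews-Garvan crank. -/
def crank (M : Multiset ℕ) : ℤ :=
  if M.count 1 = 0 then (M.sup : ℤ)
  else ((M.filter (fun p => M.count 1 < p)).card : ℤ) - (M.count 1 : ℤ)

/-- `pi1 M` is the partition with `⌊f_{2i}/2⌋` parts equal to `i` for each `i ≥ 1`, where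
`f_j` is the number of parts of `M` equal to `j`. -/
def pi1 (M : Multiset ℕ) : Multiset ℕ :=
  (Finset.Icc 1 M.sum).val.bind (fun i => Multiset.replicate (M.count (2 * i) / 2) i)

/-- Partitions of type B. -/
def TypeB (M : Multiset ℕ) : Prop :=
  M = ({3, 1} : Multiset ℕ) ∨
    (M.sum ≠ 4 ∧ rowLen M 2 + 2 ≤ rowLen M 1 ∧ conjCount M 2 + 2 ≤ conjCount M 1 ∧
      ¬ ((rowLen M 1 : ℤ) - 2 = (rowLen M 2 : ℤ) ∧ Even (rowLen M 2)) ∧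
      ∀ p : ℕ, Even p → M.count p ≤ 1)

/-- The St-crank: `crank(π₁) + srank(π)/2 + Ψ(π)`, where `Ψ(π) = 1` iff `π` is of type B. -/
noncomputable def stcrank (M : Multiset ℕ) : ℤ :=
  crank (pi1 M) + srank M / 2 + (if TypeB M then 1 else 0)

/-- The BG-rank: the alternating sum of parities of the parts, listed in nonincreasing order. -/
def bgRank (M : Multiset ℕ) : ℤ :=
  ∑ j ∈ Finset.range M.card,
    (-1 : ℤ) ^ j * (if Odd (((M.sort (· ≤ ·)).reverse).getD j 0) then 1 else 0)

/-- The residue mod 5 of the 5-core-crank of a partition of a number `≡ 4 (mod 5)`. -/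
def c5 (M : Multiset ℕ) : ℤ :=
  2 + 2 * (rLabel 5 M 0 : ℤ) + (rLabel 5 M 1 : ℤ) - (rLabel 5 M 3 : ℤ) - 2 * (rLabel 5 M 4 : ℤ)

/-- `Strip Mbig Msmall c` : the cell `c` lies in the skew shape (diagram of the big
partition minus diagram of the small one). -/
def Strip (Mbig Msmall : Multiset ℕ) (c : ℕ × ℕ) : Prop :=
  CellMem Mbig c.1 c.2 ∧ ¬ CellMem Msmall c.1 c.2

/-- Two cells are edgewise adjacent. -/
def Adj (c d : ℕ × ℕ) : Prop :=
  (c.1 = d.1 ∧ (c.2 + 1 = d.2 ∨ d.2 + 1 = c.2)) ∨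
  (c.2 = d.2 ∧ (c.1 + 1 = d.1 ∨ d.1 + 1 = c.1))

instance (M : Multiset ℕ) (x y : ℕ) : Decidable (CellMem M x y) :=
  decidable_of_iff (1 ≤ x ∧ 1 ≤ y ∧ x ≤ conjCount M y) Iff.rfl

-- basics
lemma conjCount_anti (M : Multiset ℕ) {j k : ℕ} (h : j ≤ k) : conjCount M k ≤ conjCount M j := by
  apply Multiset.card_le_card
  exact Multiset.monotone_filter_right M (fun b hb => le_trans h hb)

lemma conjCount_le_card (M : Multiset ℕ) (j : ℕ) : conjCount M j ≤ Multiset.card M :=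
  Multiset.card_le_card (Multiset.filter_le _ M)

lemma card_le_sum {M : Multiset ℕ} (hpos : ∀ p ∈ M, 0 < p) : Multiset.card M ≤ M.sum := by
  induction M using Multiset.induction with
  | empty => simp
  | cons a M ih =>
    simp only [Multiset.card_cons, Multiset.sum_cons]
    have h1 := hpos a (Multiset.mem_cons_self a M)
    have h2 := ih (fun p hp => hpos p (Multiset.mem_cons_of_mem hp))
    omega

lemma mem_le_sum {M : Multiset ℕ} {p : ℕ} (h : p ∈ M) : p ≤ M.sum :=
  Multiset.single_le_sum (fun _ _ => Nat.zero_le _) p h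

lemma conjCount_pos_le (M : Multiset ℕ) {j : ℕ} (h : 0 < conjCount M j) : j ≤ M.sum := by
  unfold conjCount at h
  rw [Multiset.card_pos] at h
  obtain ⟨p, hp⟩ := Multiset.exists_mem_of_ne_zero h
  rw [Multiset.mem_filter] at hp
  exact le_trans hp.2 (mem_le_sum hp.1)

lemma cellMem_mono {M : Multiset ℕ} {a b a' b' : ℕ} (h : CellMem M a b)
    (ha : 1 ≤ a') (hb : 1 ≤ b') (ha' : a' ≤ a) (hb' : b' ≤ b) : CellMem M a' b' :=
  ⟨ha, hb, le_trans ha' (le_trans h.2.2 (conjCount_anti M hb'))⟩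



lemma Icc_succ (m : ℕ) : Finset.Icc 1 (m+1) = insert (m+1) (Finset.Icc 1 m) := by
  ext i; simp [Finset.mem_Icc, Finset.mem_insert]; omega

lemma card_even_Icc (m : ℕ) : ((Finset.Icc 1 m).filter (fun i => Even i)).card = m / 2 := by
  induction m with
  | zero => simp
  | succ m ih =>
    rw [Icc_succ, Finset.filter_insert]
    by_cases h : Even (m+1)
    · rw [if_pos h, Finset.card_insert_of_notMem (by simp [Finset.mem_filter])]
      rw [Nat.even_iff] at h; omega
    · rw [if_neg h, ih]; rw [Nat.even_iff] at h; omega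

lemma card_odd_Icc (m : ℕ) : ((Finset.Icc 1 m).filter (fun i => Odd i)).card = (m + 1) / 2 := by
  induction m with
  | zero => simp
  | succ m ih =>
    rw [Icc_succ, Finset.filter_insert]
    by_cases h : Odd (m+1)
    · rw [if_pos h, Finset.card_insert_of_notMem (by simp [Finset.mem_filter])]
      rw [Nat.odd_iff] at h; omega
    · rw [if_neg h, ih]; rw [Nat.odd_iff] at h; omega

lemma card_odd_sum_Icc (m j : ℕ) :
    ((Finset.Icc 1 m).filter (fun i => Odd (i + j))).card
      = if Odd j then m / 2 else (m + 1) / 2 := by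
  by_cases h : Odd j
  · rw [if_pos h, ← card_even_Icc m]
    congr 1
    apply Finset.filter_congr
    intro i _
    rw [Nat.odd_iff] at h ⊢; rw [Nat.even_iff]
    constructor <;> intro h2 <;> omega
  · rw [if_neg h, ← card_odd_Icc m]
    congr 1
    apply Finset.filter_congr
    intro i _
    rw [Nat.not_odd_iff] at h; rw [Nat.odd_iff, Nat.odd_iff]
    constructor <;> intro h2 <;> omega

lemma filter_Icc_le (a N : ℕ) (h : a ≤ N) :
    (Finset.Icc 1 N).filter (fun j => j ≤ a) = Finset.Icc 1 a := by
  ext j; simp only [Finset.mem_Icc, Finset.mem_filter]; omega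

lemma conjCount_cons (a : ℕ) (M : Multiset ℕ) (j : ℕ) :
    conjCount (a ::ₘ M) j = conjCount M j + if j ≤ a then 1 else 0 := by
  unfold conjCount
  rw [Multiset.filter_cons]
  by_cases h : j ≤ a <;> simp [h, add_comm]

lemma sum_conjCount (M : Multiset ℕ) (N : ℕ) (h : ∀ p ∈ M, p ≤ N) :
    ∑ j ∈ Finset.Icc 1 N, conjCount M j = M.sum := by
  induction M using Multiset.induction with
  | empty => simp [conjCount]
  | cons a M ih =>
    have ha : a ≤ N := h a (Multiset.mem_cons_self a M)
    rw [Multiset.sum_cons]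
    simp only [conjCount_cons]
    rw [Finset.sum_add_distrib, ih (fun p hp => h p (Multiset.mem_cons_of_mem hp))]
    rw [← Finset.card_filter, filter_Icc_le a N ha, Nat.card_Icc]
    omega

lemma sum_conjCount_even (M : Multiset ℕ) (N : ℕ) (h : ∀ p ∈ M, p ≤ N) :
    ∑ j ∈ Finset.Icc 1 N, (if Even j then conjCount M j else 0)
      = (M.map (fun p => p / 2)).sum := by
  induction M using Multiset.induction with
  | empty => simp [conjCount]
  | cons a M ih =>
    have ha : a ≤ N := h a (Multiset.mem_cons_self a M)
    rw [Multiset.map_cons, Multiset.sum_cons]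
    simp only [conjCount_cons]
    have step : ∀ j, (if Even j then conjCount M j + (if j ≤ a then 1 else 0) else 0)
        = (if Even j then conjCount M j else 0) + (if Even j ∧ j ≤ a then 1 else 0) := by
      intro j
      by_cases hj : Even j <;> by_cases hj2 : j ≤ a <;> simp [hj, hj2]
    rw [Finset.sum_congr rfl (fun j _ => step j), Finset.sum_add_distrib,
      ih (fun p hp => h p (Multiset.mem_cons_of_mem hp))]
    rw [← Finset.card_filter]
    have : (Finset.Icc 1 N).filter (fun j => Even j ∧ j ≤ a)
        = (Finset.Icc 1 a).filter (fun j => Even j) := by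
      ext j; simp only [Finset.mem_Icc, Finset.mem_filter]
      constructor
      · rintro ⟨⟨h1, h2⟩, h3, h4⟩; exact ⟨⟨h1, h4⟩, h3⟩
      · rintro ⟨⟨h1, h2⟩, h3⟩; exact ⟨⟨h1, le_trans h2 ha⟩, h3, h2⟩
    rw [this, card_even_Icc]
    omega

lemma oddParts_add_halves (M : Multiset ℕ) :
    oddParts M + 2 * (M.map (fun p => p / 2)).sum = M.sum := by
  induction M using Multiset.induction with
  | empty => simp [oddParts]
  | cons a M ih =>
    unfold oddParts at *
    rw [Multiset.filter_cons, Multiset.map_cons, Multiset.sum_cons, Multiset.sum_cons,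
      Multiset.card_add]
    by_cases h : Odd a
    · rw [Nat.odd_iff] at h; simp only [if_pos (Nat.odd_iff.mpr h)]; simp only [Multiset.card_singleton]; omega
    · rw [Nat.not_odd_iff] at h; simp only [if_neg (Nat.not_odd_iff.mpr h)]; simp only [Multiset.card_zero]; omega

lemma oddConjParts_eq (M : Multiset ℕ) (N : ℕ) (h : M.sum ≤ N) :
    oddConjParts M = ((Finset.Icc 1 N).filter (fun j => Odd (conjCount M j))).card := by
  unfold oddConjParts
  congr 1
  ext j
  simp only [Finset.mem_Icc, Finset.mem_filter]
  constructor
  · rintro ⟨⟨h1, h2⟩, h3⟩; exact ⟨⟨h1, le_trans h2 h⟩, h3⟩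
  · rintro ⟨⟨h1, h2⟩, h3⟩
    refine ⟨⟨h1, conjCount_pos_le M ?_⟩, h3⟩
    rcases Nat.eq_zero_or_pos (conjCount M j) with h4 | h4
    · rw [h4] at h3; exact absurd h3 (by simp)
    · exact h4



def Dgrid (N : ℕ) (M : Multiset ℕ) : ℕ :=
  ((Finset.Icc 1 N ×ˢ Finset.Icc 1 N).filter
    (fun c => CellMem M c.1 c.2 ∧ Odd (c.1 + c.2))).card

lemma card_filter_grid (N : ℕ) (P : ℕ × ℕ → Prop) [DecidablePred P]
    [∀ j : ℕ, DecidablePred (fun i => P (i, j))] :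
    ((Finset.Icc 1 N ×ˢ Finset.Icc 1 N).filter P).card
      = ∑ j ∈ Finset.Icc 1 N, ((Finset.Icc 1 N).filter (fun i => P (i, j))).card :=
  calc ((Finset.Icc 1 N ×ˢ Finset.Icc 1 N).filter P).card
      = ∑ c ∈ Finset.Icc 1 N ×ˢ Finset.Icc 1 N, if P (c.1, c.2) then 1 else 0 := by
        rw [Finset.card_filter]
    _ = ∑ j ∈ Finset.Icc 1 N, ∑ i ∈ Finset.Icc 1 N, if P (i, j) then 1 else 0 :=
        Finset.sum_product_right' (Finset.Icc 1 N) (Finset.Icc 1 N)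
          (fun i j => if P (i, j) then 1 else 0)
    _ = ∑ j ∈ Finset.Icc 1 N, ((Finset.Icc 1 N).filter (fun i => P (i, j))).card :=
        Finset.sum_congr rfl (fun j _ => (Finset.card_filter _ _).symm)

lemma grid_col (M : Multiset ℕ) (hpos : ∀ p ∈ M, 0 < p) (N : ℕ) (hN : M.sum ≤ N)
    {j : ℕ} (hj : 1 ≤ j) (Q : ℕ → Prop) [DecidablePred Q]
    [DecidablePred (fun i => CellMem M i j ∧ Q i)] :
    (Finset.Icc 1 N).filter (fun i => CellMem M i j ∧ Q i)
      = (Finset.Icc 1 (conjCount M j)).filter Q := by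
  have hle : conjCount M j ≤ N :=
    le_trans (le_trans (conjCount_le_card M j) (card_le_sum hpos)) hN
  ext i
  rw [Finset.mem_filter, Finset.mem_filter]
  simp only [Finset.mem_Icc, CellMem]
  constructor
  · rintro ⟨⟨h1, h2⟩, ⟨h3, h4, h5⟩, h6⟩; exact ⟨⟨h1, h5⟩, h6⟩
  · rintro ⟨⟨h1, h2⟩, h3⟩; exact ⟨⟨h1, le_trans h2 hle⟩, ⟨h1, hj, h2⟩, h3⟩

lemma Dgrid_eq (M : Multiset ℕ) (hpos : ∀ p ∈ M, 0 < p) (N : ℕ) (hN : M.sum ≤ N) :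
    Dgrid N M = ∑ j ∈ Finset.Icc 1 N,
      (if Odd j then conjCount M j / 2 else (conjCount M j + 1) / 2) := by
  unfold Dgrid
  rw [card_filter_grid N (fun c => CellMem M c.1 c.2 ∧ Odd (c.1 + c.2))]
  apply Finset.sum_congr rfl
  intro j hj
  rw [grid_col M hpos N hN (Finset.mem_Icc.mp hj).1 (fun i => Odd (i + j)),
    card_odd_sum_Icc]

theorem srank_modeq_Dgrid (M : Multiset ℕ) (hpos : ∀ p ∈ M, 0 < p) (N : ℕ) (hN : M.sum ≤ N) :
    srank M ≡ 2 * (Dgrid N M : ℤ) [ZMOD 4] := by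
  have hparts : ∀ p ∈ M, p ≤ N := fun p hp => le_trans (mem_le_sum hp) hN
  set m : ℕ → ℕ := fun j => conjCount M j with hm
  set H : ℕ := (M.map (fun p => p / 2)).sum with hH
  have key : ∀ j ∈ Finset.Icc 1 N,
      ((m j : ℤ)) - 2 * ((if Even j then m j else 0 : ℕ) : ℤ)
        - ((if Odd (m j) then 1 else 0 : ℕ) : ℤ)
        - 2 * ((if Odd j then m j / 2 else (m j + 1) / 2 : ℕ) : ℤ)
        + 4 * ((if Even j then m j / 2 + m j % 2 else 0 : ℕ) : ℤ) = 0 := by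
    intro j _
    split_ifs <;>
    · simp only [Nat.even_iff, Nat.odd_iff, Nat.not_even_iff, Nat.not_odd_iff] at *
      push_cast
      omega
  have hsum0 := Finset.sum_eq_zero key
  rw [Finset.sum_add_distrib, Finset.sum_sub_distrib, Finset.sum_sub_distrib,
    Finset.sum_sub_distrib, ← Finset.mul_sum, ← Finset.mul_sum, ← Finset.mul_sum] at hsum0
  have e1 : ∑ j ∈ Finset.Icc 1 N, ((m j : ℕ) : ℤ) = (M.sum : ℤ) := by
    rw [← Nat.cast_sum]
    exact congrArg (Nat.cast : ℕ → ℤ) (sum_conjCount M N hparts)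
  have e2 : ∑ j ∈ Finset.Icc 1 N, ((if Even j then m j else 0 : ℕ) : ℤ) = (H : ℤ) := by
    rw [← Nat.cast_sum]
    exact congrArg (Nat.cast : ℕ → ℤ) (sum_conjCount_even M N hparts)
  have e3 : ∑ j ∈ Finset.Icc 1 N, ((if Odd (m j) then 1 else 0 : ℕ) : ℤ)
      = (oddConjParts M : ℤ) := by
    rw [← Nat.cast_sum, oddConjParts_eq M N hN, Finset.card_filter]
  have e4 : ∑ j ∈ Finset.Icc 1 N, ((if Odd j then m j / 2 else (m j + 1) / 2 : ℕ) : ℤ)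
      = (Dgrid N M : ℤ) := by
    rw [← Nat.cast_sum, Dgrid_eq M hpos N hN]
  rw [e1, e2, e3, e4] at hsum0
  have hop : (oddParts M : ℤ) = (M.sum : ℤ) - 2 * (H : ℤ) := by
    have h5 := oddParts_add_halves M
    rw [← hH] at h5
    push_cast [← h5]; ring
  unfold srank
  rw [hop]
  set G : ℤ := ∑ j ∈ Finset.Icc 1 N, ((if Even j then m j / 2 + m j % 2 else 0 : ℕ) : ℤ) with hG
  have heq : (M.sum : ℤ) - 2 * (H : ℤ) - (oddConjParts M : ℤ)
      = 2 * (Dgrid N M : ℤ) - 4 * G := by linarith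
  rw [heq]
  exact Int.modEq_iff_dvd.mpr ⟨G, by ring⟩



def cellsF (N : ℕ) (M : Multiset ℕ) : Finset (ℕ × ℕ) :=
  (Finset.Icc 1 N ×ˢ Finset.Icc 1 N).filter (fun c => CellMem M c.1 c.2)

lemma cellMem_bounds {M : Multiset ℕ} (hpos : ∀ p ∈ M, 0 < p) {a b : ℕ}
    (h : CellMem M a b) : a ≤ M.sum ∧ b ≤ M.sum := by
  obtain ⟨h1, h2, h3⟩ := h
  constructor
  · exact le_trans h3 (le_trans (conjCount_le_card M b) (card_le_sum hpos))
  · exact conjCount_pos_le M (lt_of_lt_of_le h1 h3)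

lemma mem_cellsF {N : ℕ} {M : Multiset ℕ} (hpos : ∀ p ∈ M, 0 < p) (hN : M.sum ≤ N)
    {c : ℕ × ℕ} : c ∈ cellsF N M ↔ CellMem M c.1 c.2 := by
  unfold cellsF
  simp only [Finset.mem_filter, Finset.mem_Icc, Finset.mem_product]
  constructor
  · rintro ⟨_, h⟩; exact h
  · intro h
    have hb := cellMem_bounds hpos h
    exact ⟨⟨⟨h.1, le_trans hb.1 hN⟩, h.2.1, le_trans hb.2 hN⟩, h⟩

lemma card_cellsF (M : Multiset ℕ) (hpos : ∀ p ∈ M, 0 < p) (N : ℕ) (hN : M.sum ≤ N) :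
    (cellsF N M).card = M.sum := by
  unfold cellsF
  rw [card_filter_grid N (fun c => CellMem M c.1 c.2)]
  have h : ∀ j ∈ Finset.Icc 1 N,
      ((Finset.Icc 1 N).filter (fun i => CellMem M i j)).card = conjCount M j := by
    intro j hj
    have h2 : (Finset.Icc 1 N).filter (fun i => CellMem M i j)
        = (Finset.Icc 1 N).filter (fun i => CellMem M i j ∧ (fun _ => True) i) := by
      apply Finset.filter_congr; intro i _; simp
    rw [h2, grid_col M hpos N hN (Finset.mem_Icc.mp hj).1 (fun _ => True)]
    simp
  rw [Finset.sum_congr rfl h, sum_conjCount M N (fun p hp => le_trans (mem_le_sum hp) hN)]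



instance (Mb Ms : Multiset ℕ) (c : ℕ × ℕ) : Decidable (Strip Mb Ms c) :=
  decidable_of_iff (CellMem Mb c.1 c.2 ∧ ¬ CellMem Ms c.1 c.2) Iff.rfl

lemma adj_content {u v : ℕ × ℕ} (h : Adj u v) :
    ((v.2 : ℤ) - v.1 = (u.2 : ℤ) - u.1 + 1) ∨ ((v.2 : ℤ) - v.1 = (u.2 : ℤ) - u.1 - 1) := by
  rcases h with ⟨h1, h2 | h2⟩ | ⟨h1, h2 | h2⟩ <;> omega

section StripLemmas

variable {Mb Ms : Multiset ℕ}

lemma strip_no_se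
    (hno2x2 : ¬ ∃ a b : ℕ, Strip Mb Ms (a, b) ∧ Strip Mb Ms (a + 1, b) ∧
      Strip Mb Ms (a, b + 1) ∧ Strip Mb Ms (a + 1, b + 1))
    {c d : ℕ × ℕ} (hc : Strip Mb Ms c) (hd : Strip Mb Ms d)
    (hf : (c.2 : ℤ) - c.1 = (d.2 : ℤ) - d.1) (hlt : c.1 < d.1) : False := by
  obtain ⟨ha1, hb1, _⟩ := hc.1
  obtain ⟨hd1, hd2, _⟩ := hd.1
  have h1 : c.1 + 1 ≤ d.1 := hlt
  have h2 : c.2 + 1 ≤ d.2 := by omega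
  apply hno2x2
  refine ⟨c.1, c.2, ⟨hc.1, hc.2⟩, ?_, ?_, ?_⟩
  · exact ⟨cellMem_mono hd.1 (by omega) hb1 h1 (by omega),
      fun h => hc.2 (cellMem_mono h ha1 hb1 (by omega) le_rfl)⟩
  · exact ⟨cellMem_mono hd.1 ha1 (by omega) (by omega) h2,
      fun h => hc.2 (cellMem_mono h ha1 hb1 le_rfl (by omega))⟩
  · exact ⟨cellMem_mono hd.1 (by omega) (by omega) h1 h2,
      fun h => hc.2 (cellMem_mono h ha1 hb1 (by omega) (by omega))⟩

lemma strip_content_inj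
    (hno2x2 : ¬ ∃ a b : ℕ, Strip Mb Ms (a, b) ∧ Strip Mb Ms (a + 1, b) ∧
      Strip Mb Ms (a, b + 1) ∧ Strip Mb Ms (a + 1, b + 1))
    {c d : ℕ × ℕ} (hc : Strip Mb Ms c) (hd : Strip Mb Ms d)
    (hf : (c.2 : ℤ) - c.1 = (d.2 : ℤ) - d.1) : c = d := by
  rcases lt_trichotomy c.1 d.1 with h | h | h
  · exact absurd (strip_no_se hno2x2 hc hd hf h) (fun f => f)
  · have : c.2 = d.2 := by omega
    exact Prod.ext h this
  · exact absurd (strip_no_se hno2x2 hd hc hf.symm h) (fun f => f)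

lemma strip_ivt {c d : ℕ × ℕ}
    (h : Relation.ReflTransGen (fun u v => Strip Mb Ms u ∧ Strip Mb Ms v ∧ Adj u v) c d)
    (hc : Strip Mb Ms c) :
    ∀ m : ℤ, min ((c.2 : ℤ) - c.1) ((d.2 : ℤ) - d.1) ≤ m →
      m ≤ max ((c.2 : ℤ) - c.1) ((d.2 : ℤ) - d.1) →
      ∃ e : ℕ × ℕ, Strip Mb Ms e ∧ (e.2 : ℤ) - e.1 = m := by
  induction h with
  | refl =>
    intro m h1 h2
    exact ⟨c, hc, by omega⟩
  | @tail u v h1 h2 ih =>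
    intro m hm1 hm2
    by_cases hv : m = (v.2 : ℤ) - v.1
    · exact ⟨v, h2.2.1, hv.symm⟩
    · rcases adj_content h2.2.2 with ha | ha <;>
        exact ih m (by omega) (by omega)

lemma strip_head_bounds {x y : ℕ}
    (hhead : Strip Mb Ms (x, y))
    (hmaxcol : ∀ c : ℕ × ℕ, Strip Mb Ms c → c.2 ≤ y)
    (hminrow : ∀ c : ℕ × ℕ, Strip Mb Ms c → c.2 = y → x ≤ c.1)
    {c : ℕ × ℕ} (hc : Strip Mb Ms c) : x ≤ c.1 ∧ c.2 ≤ y := by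
  have hy := hmaxcol c hc
  refine ⟨?_, hy⟩
  by_contra hlt
  push_neg at hlt
  have hcy : CellMem Mb c.1 y := cellMem_mono hhead.1 hc.1.1 hhead.1.2.1 (by omega) le_rfl
  by_cases hm : CellMem Ms c.1 y
  · exact hc.2 (cellMem_mono hm hc.1.1 hc.1.2.1 le_rfl hy)
  · have := hminrow (c.1, y) ⟨hcy, hm⟩ rfl
    omega

end StripLemmas


lemma two_mul_odd_count (l : ℕ) : ∀ a : ℤ,
    2 * ((((Finset.Icc (a - l + 1) a).filter (fun d => Odd d)).card : ℤ))
      ≡ 2 * l * a + (l : ℤ) ^ 2 - l [ZMOD 4] := by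
  induction l with
  | zero =>
    intro a
    have h : Finset.Icc (a - (0 : ℕ) + 1) a = ∅ := Finset.Icc_eq_empty (by push_cast; omega)
    rw [h]
    simp
  | succ k ih =>
    intro a
    have hins : Finset.Icc (a - (k + 1 : ℕ) + 1) a = insert (a - k) (Finset.Icc (a - k + 1) a) := by
      ext z; simp only [Finset.mem_insert, Finset.mem_Icc]; push_cast; omega
    rw [hins, Finset.filter_insert]
    have hIH := ih a
    have h1 : (2 : ℤ) * ((k : ℤ) + 1) * a + ((k : ℤ) + 1) ^ 2 - ((k : ℤ) + 1)
        = (2 * k * a + (k : ℤ) ^ 2 - k) + (2 * a + 2 * k) := by ring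
    by_cases hodd : Odd (a - (k : ℤ))
    · rw [if_pos hodd, Finset.card_insert_of_notMem
        (by simp only [Finset.mem_filter, Finset.mem_Icc]; omega)]
      obtain ⟨t, ht⟩ := hodd
      have h2 : (2 : ℤ) ≡ 2 * a + 2 * k [ZMOD 4] :=
        Int.modEq_iff_dvd.mpr ⟨t + k, by omega⟩
      calc 2 * ((((Finset.Icc (a - k + 1) a).filter (fun d => Odd d)).card + 1 : ℕ) : ℤ)
          = 2 * ((((Finset.Icc (a - k + 1) a).filter (fun d => Odd d)).card : ℕ) : ℤ) + 2 := by
            push_cast; ring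
        _ ≡ (2 * k * a + (k : ℤ) ^ 2 - k) + (2 * a + 2 * k) [ZMOD 4] := Int.ModEq.add hIH h2
        _ = 2 * ((k : ℕ) + 1 : ℕ) * a + (((k : ℕ) + 1 : ℕ) : ℤ) ^ 2 - (((k : ℕ) + 1 : ℕ) : ℤ) := by
            push_cast; ring
    · rw [if_neg hodd]
      rw [Int.not_odd_iff_even] at hodd
      obtain ⟨t, ht⟩ := hodd
      have h2 : (0 : ℤ) ≡ 2 * a + 2 * k [ZMOD 4] :=
        Int.modEq_iff_dvd.mpr ⟨t + k, by omega⟩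
      calc 2 * ((((Finset.Icc (a - k + 1) a).filter (fun d => Odd d)).card : ℕ) : ℤ)
          = 2 * ((((Finset.Icc (a - k + 1) a).filter (fun d => Odd d)).card : ℕ) : ℤ) + 0 := by ring
        _ ≡ (2 * k * a + (k : ℤ) ^ 2 - k) + (2 * a + 2 * k) [ZMOD 4] := Int.ModEq.add hIH h2
        _ = 2 * ((k : ℕ) + 1 : ℕ) * a + (((k : ℕ) + 1 : ℕ) : ℤ) ^ 2 - (((k : ℕ) + 1 : ℕ) : ℤ) := by
            push_cast; ring



/-- Attaching a border strip of length `ℓ` (an edgewise connected skew shape of `ℓ` cells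
containing no 2×2 square) whose head (its extreme North-East cell, the cell with the largest
column index) is in row `x`, column `y`, changes the srank by `2ℓ(x+y) + ℓ² - ℓ` mod `4`. -/
theorem srank_add_border_strip (n ℓ : ℕ) (hl : 1 ≤ ℓ) (π : Nat.Partition n)
    (πss : Nat.Partition (n + ℓ)) (x y : ℕ)
    (hsub : ∀ a b : ℕ, CellMem π.parts a b → CellMem πss.parts a b)
    (hconn : ∀ c d : ℕ × ℕ, Strip πss.parts π.parts c → Strip πss.parts π.parts d →
      Relation.ReflTransGen
        (fun u v => Strip πss.parts π.parts u ∧ Strip πss.parts π.parts v ∧ Adj u v) c d)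
    (hno2x2 : ¬ ∃ a b : ℕ, Strip πss.parts π.parts (a, b) ∧
      Strip πss.parts π.parts (a + 1, b) ∧ Strip πss.parts π.parts (a, b + 1) ∧
      Strip πss.parts π.parts (a + 1, b + 1))
    (hhead : Strip πss.parts π.parts (x, y))
    (hmaxcol : ∀ c : ℕ × ℕ, Strip πss.parts π.parts c → c.2 ≤ y)
    (hminrow : ∀ c : ℕ × ℕ, Strip πss.parts π.parts c → c.2 = y → x ≤ c.1) :
    srank πss.parts ≡
      srank π.parts + 2 * (ℓ : ℤ) * ((x : ℤ) + (y : ℤ)) + (ℓ : ℤ) ^ 2 - (ℓ : ℤ) [ZMOD 4] := by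
  have hposb : ∀ p ∈ πss.parts, 0 < p := fun p hp => πss.parts_pos hp
  have hposs : ∀ p ∈ π.parts, 0 < p := fun p hp => π.parts_pos hp
  have hsumb : πss.parts.sum = n + ℓ := πss.parts_sum
  have hsums : π.parts.sum = n := π.parts_sum
  have hNs : π.parts.sum ≤ n + ℓ := by omega
  have hNb : πss.parts.sum ≤ n + ℓ := by omega
  set S : Finset (ℕ × ℕ) := cellsF (n + ℓ) πss.parts \ cellsF (n + ℓ) π.parts with hS
  have hmemS : ∀ c : ℕ × ℕ, c ∈ S ↔ Strip πss.parts π.parts c := by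
    intro c
    rw [hS, Finset.mem_sdiff, mem_cellsF hposb hNb, mem_cellsF hposs hNs]
    exact Iff.rfl
  have hsub' : cellsF (n + ℓ) π.parts ⊆ cellsF (n + ℓ) πss.parts := by
    intro c hc
    rw [mem_cellsF hposb hNb]
    exact hsub c.1 c.2 ((mem_cellsF hposs hNs).mp hc)
  have hcardS : S.card = ℓ := by
    have h := Finset.card_sdiff_add_card_eq_card hsub'
    rw [card_cellsF _ hposb (n + ℓ) hNb, card_cellsF _ hposs (n + ℓ) hNs, hsumb, hsums] at h
    rw [hS]
    omega
  -- D difference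
  have hDF : ∀ (M : Multiset ℕ), Dgrid (n + ℓ) M = ((cellsF (n + ℓ) M).filter (fun c => Odd (c.1 + c.2))).card := by
    intro M
    unfold Dgrid cellsF
    rw [Finset.filter_filter]
  have hoddsub : (cellsF (n + ℓ) π.parts).filter (fun c => Odd (c.1 + c.2))
      ⊆ (cellsF (n + ℓ) πss.parts).filter (fun c => Odd (c.1 + c.2)) :=
    Finset.filter_subset_filter _ hsub'
  have hsdiff_filter : S.filter (fun c => Odd (c.1 + c.2))
      = (cellsF (n + ℓ) πss.parts).filter (fun c => Odd (c.1 + c.2))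
        \ (cellsF (n + ℓ) π.parts).filter (fun c => Odd (c.1 + c.2)) := by
    rw [hS]
    ext c
    simp only [Finset.mem_filter, Finset.mem_sdiff]
    tauto
  have hDdiff : Dgrid (n + ℓ) πss.parts
      = Dgrid (n + ℓ) π.parts + (S.filter (fun c => Odd (c.1 + c.2))).card := by
    rw [hDF, hDF, ← Finset.card_sdiff_add_card_eq_card hoddsub, ← hsdiff_filter]
    omega
  -- content function
  set f : ℕ × ℕ → ℤ := fun c => (c.2 : ℤ) - c.1 with hf
  have hinj : Set.InjOn f ↑S := by
    intro c hc d hd hfeq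
    exact strip_content_inj hno2x2 ((hmemS c).mp hc) ((hmemS d).mp hd) hfeq
  have hx1 : 1 ≤ x := hhead.1.1
  have hy1 : 1 ≤ y := hhead.1.2.1
  have hbounds := fun {c} (hc : Strip πss.parts π.parts c) =>
    strip_head_bounds hhead hmaxcol hminrow hc
  have hcardimg : (S.image f).card = ℓ := by
    rw [Finset.card_image_of_injOn hinj, hcardS]
  have himgsub : S.image f ⊆ Finset.Icc ((y : ℤ) - x - ℓ + 1) ((y : ℤ) - x) := by
    intro z hz
    obtain ⟨c, hcS, rfl⟩ := Finset.mem_image.mp hz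
    have hc := (hmemS c).mp hcS
    obtain ⟨hb1, hb2⟩ := hbounds hc
    rw [Finset.mem_Icc]
    constructor
    · by_contra hlow
      push_neg at hlow
      have hsubI : Finset.Icc (f c) ((y : ℤ) - x) ⊆ S.image f := by
        intro m hm
        rw [Finset.mem_Icc] at hm
        obtain ⟨e, he, hfe⟩ := strip_ivt (hconn c (x, y) hc hhead) hc m
          (by simp only [hf] at hm ⊢; omega) (by simp only [hf] at hm ⊢; omega)
        exact Finset.mem_image.mpr ⟨e, (hmemS e).mpr he, hfe⟩
      have hcard := Finset.card_le_card hsubI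
      rw [Int.card_Icc, hcardimg] at hcard
      simp only [hf] at hcard hlow
      omega
    · simp only [hf]; omega
  have himg : S.image f = Finset.Icc ((y : ℤ) - x - ℓ + 1) ((y : ℤ) - x) := by
    apply Finset.eq_of_subset_of_card_le himgsub
    rw [Int.card_Icc, hcardimg]
    omega
  -- odd-count transfer
  have hfilter_eq : S.filter (fun c => Odd (c.1 + c.2)) = S.filter (fun c => Odd (f c)) := by
    apply Finset.filter_congr
    intro c _
    rw [Nat.odd_iff, Int.odd_iff]
    simp only [hf]
    constructor <;> intro h <;> omega
  have hcount : ((S.filter (fun c => Odd (c.1 + c.2))).card : ℤ)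
      = (((Finset.Icc ((y : ℤ) - x - ℓ + 1) ((y : ℤ) - x)).filter (fun d => Odd d)).card : ℤ) := by
    rw [hfilter_eq, ← himg, Finset.filter_image,
      Finset.card_image_of_injOn (hinj.mono (by exact_mod_cast Finset.filter_subset _ S))]
  -- final chain
  have hA1 := srank_modeq_Dgrid πss.parts hposb (n + ℓ) hNb
  have hA2 := srank_modeq_Dgrid π.parts hposs (n + ℓ) hNs
  have hcnt := two_mul_odd_count ℓ ((y : ℤ) - x)
  have hadj : 2 * (ℓ : ℤ) * ((y : ℤ) - x) + (ℓ : ℤ) ^ 2 - ℓ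
      ≡ 2 * (ℓ : ℤ) * ((x : ℤ) + y) + (ℓ : ℤ) ^ 2 - ℓ [ZMOD 4] :=
    Int.modEq_iff_dvd.mpr ⟨(ℓ : ℤ) * x, by ring⟩
  calc srank πss.parts
      ≡ 2 * (Dgrid (n + ℓ) πss.parts : ℤ) [ZMOD 4] := hA1
    _ = 2 * (Dgrid (n + ℓ) π.parts : ℤ)
        + 2 * ((S.filter (fun c => Odd (c.1 + c.2))).card : ℤ) := by
        rw [hDdiff]; push_cast; ring
    _ ≡ srank π.parts + (2 * (ℓ : ℤ) * ((y : ℤ) - x) + (ℓ : ℤ) ^ 2 - ℓ) [ZMOD 4] := by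
        refine Int.ModEq.add hA2.symm ?_
        rw [hcount]
        exact hcnt
    _ ≡ srank π.parts + (2 * (ℓ : ℤ) * ((x : ℤ) + y) + (ℓ : ℤ) ^ 2 - ℓ) [ZMOD 4] :=
        Int.ModEq.add_left _ hadj
    _ = srank π.parts + 2 * (ℓ : ℤ) * ((x : ℤ) + (y : ℤ)) + (ℓ : ℤ) ^ 2 - (ℓ : ℤ) := by ring


end BGG

end
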